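/- Let M be a matroid on a totally ordered ground set. The poset on bases of M, defined as the transitive closure of the relation B₁ ← B₂ whenever B₂ = (B₁∖{e})∪{f} with e the minimum element of the fundamental circuit Z_{B₁}(f) (external pivoting), becomes a lattice after adjoining a bottom element 0̂. -/
import Mathlib


noncomputable section
attribute [local instance] Classical.propDecidable

namespace TutteActivities
set_option linter.unusedSectionVars false

variable {α : Type*} [DecidableEq α]

/-- `ℬ` is the family of bases of a matroid on ground set `E`:
nonempty, contained in `E`, and satisfying the basis-exchange axiom. -/
def IsMatroidOn (E : Finset α) (ℬ : Finset (Finset α)) : Prop :=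
  ℬ.Nonempty ∧ (∀ B ∈ ℬ, B ⊆ E) ∧
    ∀ B₁ ∈ ℬ, ∀ B₂ ∈ ℬ, ∀ e ∈ B₁ \ B₂, ∃ f ∈ B₂ \ B₁, insert f (B₁.erase e) ∈ ℬ

/-- A set is independent if it is contained in a basis. -/
def Indep (ℬ : Finset (Finset α)) (S : Finset α) : Prop := ∃ B ∈ ℬ, S ⊆ B

/-- A circuit is a minimal dependent subset of the ground set. -/
def Circuit (E : Finset α) (ℬ : Finset (Finset α)) (C : Finset α) : Prop :=
  C ⊆ E ∧ ¬ Indep ℬ C ∧ ∀ D ⊂ C, Indep ℬ D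

/-- A cocircuit is a minimal subset of the ground set meeting every basis. -/
def Cocircuit (E : Finset α) (ℬ : Finset (Finset α)) (C : Finset α) : Prop :=
  C ⊆ E ∧ (∀ B ∈ ℬ, (B ∩ C).Nonempty) ∧ ∀ D ⊂ C, ∃ B ∈ ℬ, B ∩ D = ∅

/-- The rank of a set `A`: the largest size of the intersection of a basis with `A`. -/
def rank (ℬ : Finset (Finset α)) (A : Finset α) : ℕ := ℬ.sup fun B => (B ∩ A).card

/-- `e` is the minimum element of `C` with respect to the order given by labels `σ`. -/
def IsMinOf (σ : α → ℕ) (e : α) (C : Finset α) : Prop := e ∈ C ∧ ∀ g ∈ C, σ e ≤ σ g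

/-- `f ∉ B` is externally active: `f` is the minimum of the fundamental circuit of `f`,
i.e. of a circuit contained in `B ∪ {f}`. -/
def ExtActive (E : Finset α) (ℬ : Finset (Finset α)) (σ : α → ℕ) (B : Finset α) (f : α) :
    Prop :=
  f ∉ B ∧ ∃ C, Circuit E ℬ C ∧ C ⊆ insert f B ∧ IsMinOf σ f C

/-- `e ∈ B` is internally active: `e` is the minimum of the fundamental cocircuit of `e`,
i.e. of a cocircuit contained in `(E \ B) ∪ {e}`. -/
def IntActive (E : Finset α) (ℬ : Finset (Finset α)) (σ : α → ℕ) (B : Finset α) (e : α) :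
    Prop :=
  e ∈ B ∧ ∃ C, Cocircuit E ℬ C ∧ C ⊆ insert e (E \ B) ∧ IsMinOf σ e C

/-- The set of externally active elements of a basis `B`. -/
def extSet (E : Finset α) (ℬ : Finset (Finset α)) (σ : α → ℕ) (B : Finset α) : Finset α :=
  E.filter (ExtActive E ℬ σ B)

/-- The set of internally active elements of a basis `B`. -/
def intSet (E : Finset α) (ℬ : Finset (Finset α)) (σ : α → ℕ) (B : Finset α) : Finset α :=
  E.filter (IntActive E ℬ σ B)

/-- The Tutte polynomial via Whitney's corank-nullity expansion. -/
def tutte (E : Finset α) (ℬ : Finset (Finset α)) (x y : ℤ) : ℤ :=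
  ∑ A ∈ E.powerset, (x - 1) ^ (rank ℬ E - rank ℬ A) * (y - 1) ^ (A.card - rank ℬ A)

/-- Externally active pivoting: `B₁ ← B₂` when `B₂ = (B₁ \ {e}) ∪ {f}` with `e` the
minimum element of the fundamental circuit `Z_{B₁}(f)`. -/
def extPivot (E : Finset α) (ℬ : Finset (Finset α)) (σ : α → ℕ)
    (B₁ B₂ : Finset α) : Prop :=
  B₁ ∈ ℬ ∧ B₂ ∈ ℬ ∧ ∃ e f, e ∈ B₁ ∧ f ∉ B₁ ∧ B₂ = insert f (B₁.erase e) ∧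
    ∃ C, Circuit E ℬ C ∧ C ⊆ insert f B₁ ∧ f ∈ C ∧ e ∈ C ∧ IsMinOf σ e C

/-- Internally active pivoting: `B₁ ←* B₂` when `B₁ = (B₂ \ {e}) ∪ {f}` with `e` the
minimum element of the fundamental cocircuit `U_{B₁}(f)`. -/
def intPivot (E : Finset α) (ℬ : Finset (Finset α)) (σ : α → ℕ)
    (B₁ B₂ : Finset α) : Prop :=
  B₁ ∈ ℬ ∧ B₂ ∈ ℬ ∧ ∃ e f, e ∈ B₂ ∧ f ∉ B₂ ∧ B₁ = insert f (B₂.erase e) ∧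
    ∃ C, Cocircuit E ℬ C ∧ C ⊆ insert f (E \ B₁) ∧ f ∈ C ∧ e ∈ C ∧ IsMinOf σ e C
/-- The order on `Option (Finset α)` obtained from a relation on bases by taking the
reflexive-transitive closure and adjoining `none` as a bottom element `0̂`. -/
def withBotLe (r : Finset α → Finset α → Prop) :
    Option (Finset α) → Option (Finset α) → Prop
  | none, _ => True
  | some _, none => False
  | some a, some b => Relation.ReflTransGen r a b


section Aux

variable {E : Finset α} {ℬ : Finset (Finset α)} {σ : α → ℕ}

theorem Indep.subset {S T : Finset α} (h : Indep ℬ S) (hTS : T ⊆ S) : Indep ℬ T := by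
  obtain ⟨B, hB, hSB⟩ := h; exact ⟨B, hB, hTS.trans hSB⟩

theorem indep_of_mem {B : Finset α} (hB : B ∈ ℬ) : Indep ℬ B := ⟨B, hB, le_refl _⟩

/-- All bases have the same cardinality. -/
theorem card_basis_eq (hM : IsMatroidOn E ℬ) :
    ∀ B₁ ∈ ℬ, ∀ B₂ ∈ ℬ, B₁.card = B₂.card := by
  obtain ⟨-, -, hex⟩ := hM
  intro B₁ hB₁ B₂ hB₂
  -- strong induction on card (B₁ \ B₂)
  generalize hn : (B₁ \ B₂).card = n
  induction n using Nat.strong_induction_on generalizing B₁ with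
  | _ n ih =>
    rcases eq_or_ne n 0 with rfl | hne
    · have hsub : B₁ ⊆ B₂ := by
        intro x hx
        by_contra hxB₂
        have : x ∈ B₁ \ B₂ := Finset.mem_sdiff.2 ⟨hx, hxB₂⟩
        have := Finset.card_eq_zero.1 hn ▸ this
        simp at this
      have : B₂ \ B₁ = ∅ := by
        by_contra hBne
        obtain ⟨e, he⟩ := Finset.nonempty_iff_ne_empty.2 hBne
        obtain ⟨f, hf, -⟩ := hex B₂ hB₂ B₁ hB₁ e he
        rw [Finset.sdiff_eq_empty_iff_subset.2 hsub] at hf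
        simp at hf
      have : B₂ ⊆ B₁ := by
        intro x hx; by_contra hxB₁
        have hh : x ∈ B₂ \ B₁ := Finset.mem_sdiff.2 ⟨hx, hxB₁⟩
        rw [this] at hh; simp at hh
      rw [Finset.Subset.antisymm hsub this]
    · obtain ⟨e, he⟩ := Finset.card_ne_zero.1 (hn ▸ hne)
      obtain ⟨f, hf, hB₁'⟩ := hex B₁ hB₁ B₂ hB₂ e he
      rw [Finset.mem_sdiff] at he hf
      have hcard : (insert f (B₁.erase e)).card = B₁.card := by
        rw [Finset.card_insert_of_notMem (fun h => hf.2 (Finset.mem_of_mem_erase h)),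
          Finset.card_erase_of_mem he.1]
        have := Finset.card_pos.2 ⟨e, he.1⟩
        omega
      have hdiff : (insert f (B₁.erase e)) \ B₂ = (B₁ \ B₂).erase e := by
        ext x
        simp only [Finset.mem_sdiff, Finset.mem_insert, Finset.mem_erase]
        constructor
        · rintro ⟨(rfl | ⟨hxe, hxB₁⟩), hxB₂⟩
          · exact absurd hf.1 hxB₂
          · exact ⟨hxe, hxB₁, hxB₂⟩
        · rintro ⟨hxe, hxB₁, hxB₂⟩
          exact ⟨Or.inr ⟨hxe, hxB₁⟩, hxB₂⟩
      have hlt : ((insert f (B₁.erase e)) \ B₂).card < n := by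
        rw [hdiff, Finset.card_erase_of_mem (Finset.mem_sdiff.2 ⟨he.1, he.2⟩), hn]
        omega
      rw [← hcard]
      exact ih _ hlt _ hB₁' rfl

/-- Independence augmentation, derived from the basis exchange axiom. -/
theorem augment (hM : IsMatroidOn E ℬ) {I J : Finset α}
    (hI : Indep ℬ I) (hJ : Indep ℬ J) (hc : I.card < J.card) :
    ∃ x ∈ J, x ∉ I ∧ Indep ℬ (insert x I) := by
  obtain ⟨BI, hBI, hIBI⟩ := hI
  obtain ⟨BJ, hBJ, hJBJ⟩ := hJ
  classical
  set T := (ℬ ×ˢ ℬ).filter (fun p => I ⊆ p.1 ∧ J ⊆ p.2) with hT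
  have hTne : T.Nonempty := ⟨(BI, BJ), by simp [hT, Finset.mem_product, hBI, hBJ, hIBI, hJBJ]⟩
  obtain ⟨p, hp, hmin⟩ := T.exists_min_image
    (fun p => (p.1 \ (I ∪ p.2)).card + (p.2 \ (J ∪ p.1)).card) hTne
  rw [hT, Finset.mem_filter, Finset.mem_product] at hp
  obtain ⟨⟨hB₁, hB₂⟩, hIB₁, hJB₂⟩ := hp
  set B₁ := p.1; set B₂ := p.2
  have hex := hM.2.2
  -- B₁ ⊆ I ∪ B₂
  have h1 : B₁ ⊆ I ∪ B₂ := by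
    by_contra hcon
    obtain ⟨e, heB₁, he⟩ := Finset.not_subset.1 hcon
    rw [Finset.mem_union] at he; push_neg at he
    obtain ⟨f, hf, hB₁'⟩ := hex B₁ hB₁ B₂ hB₂ e (Finset.mem_sdiff.2 ⟨heB₁, he.2⟩)
    rw [Finset.mem_sdiff] at hf
    have hmem : (insert f (B₁.erase e), B₂) ∈ T := by
      rw [hT, Finset.mem_filter, Finset.mem_product]
      refine ⟨⟨hB₁', hB₂⟩, ?_, hJB₂⟩
      intro x hx
      exact Finset.mem_insert_of_mem (Finset.mem_erase.2 ⟨fun h => he.1 (h ▸ hx), hIB₁ hx⟩)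
    have hle := hmin _ hmem
    dsimp only at hle
    have hsub1 : (insert f (B₁.erase e)) \ (I ∪ B₂) ⊆ (B₁ \ (I ∪ B₂)).erase e := by
      intro x hx
      rw [Finset.mem_sdiff, Finset.mem_insert, Finset.mem_erase] at hx
      rcases hx.1 with rfl | ⟨hxe, hxB₁⟩
      · exact absurd (Finset.mem_union_right _ hf.1) hx.2
      · exact Finset.mem_erase.2 ⟨hxe, Finset.mem_sdiff.2 ⟨hxB₁, hx.2⟩⟩
    have hsub2 : B₂ \ (J ∪ insert f (B₁.erase e)) ⊆ B₂ \ (J ∪ B₁) := by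
      intro x hx
      rw [Finset.mem_sdiff, Finset.mem_union] at hx ⊢
      push_neg at hx ⊢
      refine ⟨hx.1, hx.2.1, fun hxB₁ => hx.2.2 ?_⟩
      refine Finset.mem_insert_of_mem (Finset.mem_erase.2 ⟨?_, hxB₁⟩)
      rintro rfl; exact he.2 hx.1
    have hc1 : ((insert f (B₁.erase e)) \ (I ∪ B₂)).card <
        (B₁ \ (I ∪ B₂)).card := by
      have hmem' : e ∈ B₁ \ (I ∪ B₂) :=
        Finset.mem_sdiff.2 ⟨heB₁, by rw [Finset.mem_union]; push_neg; exact he⟩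
      calc ((insert f (B₁.erase e)) \ (I ∪ B₂)).card
          ≤ ((B₁ \ (I ∪ B₂)).erase e).card := Finset.card_le_card hsub1
        _ < (B₁ \ (I ∪ B₂)).card := by
            rw [Finset.card_erase_of_mem hmem']
            exact Nat.sub_lt (Finset.card_pos.2 ⟨e, hmem'⟩) one_pos
    have := Finset.card_le_card hsub2
    omega
  -- B₂ ⊆ J ∪ B₁
  have h2 : B₂ ⊆ J ∪ B₁ := by
    by_contra hcon
    obtain ⟨e, heB₂, he⟩ := Finset.not_subset.1 hcon
    rw [Finset.mem_union] at he; push_neg at he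
    obtain ⟨f, hf, hB₂'⟩ := hex B₂ hB₂ B₁ hB₁ e (Finset.mem_sdiff.2 ⟨heB₂, he.2⟩)
    rw [Finset.mem_sdiff] at hf
    have hmem : (B₁, insert f (B₂.erase e)) ∈ T := by
      rw [hT, Finset.mem_filter, Finset.mem_product]
      refine ⟨⟨hB₁, hB₂'⟩, hIB₁, ?_⟩
      intro x hx
      exact Finset.mem_insert_of_mem (Finset.mem_erase.2 ⟨fun h => he.1 (h ▸ hx), hJB₂ hx⟩)
    have hle := hmin _ hmem
    dsimp only at hle
    have hsub1 : (insert f (B₂.erase e)) \ (J ∪ B₁) ⊆ (B₂ \ (J ∪ B₁)).erase e := by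
      intro x hx
      rw [Finset.mem_sdiff, Finset.mem_insert, Finset.mem_erase] at hx
      rcases hx.1 with rfl | ⟨hxe, hxB₂⟩
      · exact absurd (Finset.mem_union_right _ hf.1) hx.2
      · exact Finset.mem_erase.2 ⟨hxe, Finset.mem_sdiff.2 ⟨hxB₂, hx.2⟩⟩
    have hsub2 : B₁ \ (I ∪ insert f (B₂.erase e)) ⊆ B₁ \ (I ∪ B₂) := by
      intro x hx
      rw [Finset.mem_sdiff, Finset.mem_union] at hx ⊢
      push_neg at hx ⊢
      refine ⟨hx.1, hx.2.1, fun hxB₂ => hx.2.2 ?_⟩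
      refine Finset.mem_insert_of_mem (Finset.mem_erase.2 ⟨?_, hxB₂⟩)
      rintro rfl; exact he.2 hx.1
    have hc1 : ((insert f (B₂.erase e)) \ (J ∪ B₁)).card <
        (B₂ \ (J ∪ B₁)).card := by
      have hmem' : e ∈ B₂ \ (J ∪ B₁) :=
        Finset.mem_sdiff.2 ⟨heB₂, by rw [Finset.mem_union]; push_neg; exact he⟩
      calc ((insert f (B₂.erase e)) \ (J ∪ B₁)).card
          ≤ ((B₂ \ (J ∪ B₁)).erase e).card := Finset.card_le_card hsub1
        _ < (B₂ \ (J ∪ B₁)).card := by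
            rw [Finset.card_erase_of_mem hmem']
            exact Nat.sub_lt (Finset.card_pos.2 ⟨e, hmem'⟩) one_pos
    have := Finset.card_le_card hsub2
    omega
  -- now extract the augmenting element
  by_cases hx : ∃ x ∈ B₁ ∩ J, x ∉ I
  · obtain ⟨x, hx, hxI⟩ := hx
    rw [Finset.mem_inter] at hx
    refine ⟨x, hx.2, hxI, B₁, hB₁, ?_⟩
    exact Finset.insert_subset hx.1 hIB₁
  · exfalso
    push_neg at hx
    -- B₁ ∩ J ⊆ I; then B₂ ⊇ J ∪ (B₁ \ I) disjointly, |B₂| > |B₁|.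
    have hJd : Disjoint J (B₁ \ I) := by
      rw [Finset.disjoint_right]
      intro x hxd hxJ
      rw [Finset.mem_sdiff] at hxd
      exact hxd.2 (hx x (Finset.mem_inter.2 ⟨hxd.1, hxJ⟩) )
    have hsub : J ∪ (B₁ \ I) ⊆ B₂ := by
      apply Finset.union_subset hJB₂
      intro x hxd
      rw [Finset.mem_sdiff] at hxd
      rcases Finset.mem_union.1 (h1 hxd.1) with h | h
      · exact absurd h hxd.2
      · exact h
    have hcard : J.card + (B₁ \ I).card ≤ B₂.card := by
      rw [← Finset.card_union_of_disjoint hJd]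
      exact Finset.card_le_card hsub
    have hBI' : (B₁ \ I).card = B₁.card - I.card := by
      rw [Finset.card_sdiff_of_subset hIB₁]
    have heq := card_basis_eq hM B₁ hB₁ B₂ hB₂
    have hIle : I.card ≤ B₁.card := Finset.card_le_card hIB₁
    omega


theorem not_indep_of_subset {S T : Finset α} (h : ¬ Indep ℬ S) (hST : S ⊆ T) :
    ¬ Indep ℬ T := fun hT => h (hT.subset hST)

/-- Every independent subset of `X` extends to a maximal one. -/
theorem exists_maximal_indep {T X : Finset α} (hT : Indep ℬ T) (hTX : T ⊆ X) :
    ∃ M, T ⊆ M ∧ M ⊆ X ∧ Indep ℬ M ∧ ∀ x ∈ X, x ∉ M → ¬ Indep ℬ (insert x M) := by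
  classical
  set F := X.powerset.filter (fun M => T ⊆ M ∧ Indep ℬ M) with hF
  have hne : F.Nonempty := ⟨T, by simp [hF, Finset.mem_powerset, hTX, hT]⟩
  obtain ⟨M, hM, hmax⟩ := F.exists_max_image Finset.card hne
  rw [hF, Finset.mem_filter, Finset.mem_powerset] at hM
  refine ⟨M, hM.2.1, hM.1, hM.2.2, fun x hxX hxM hind => ?_⟩
  have hmem : insert x M ∈ F := by
    rw [hF, Finset.mem_filter, Finset.mem_powerset]
    exact ⟨Finset.insert_subset hxX hM.1, hM.2.1.trans (Finset.subset_insert _ _), hind⟩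
  have := hmax _ hmem
  rw [Finset.card_insert_of_notMem hxM] at this
  omega

/-- Any two maximal independent subsets of `X` have the same cardinality. -/
theorem maximal_indep_card_eq (hM : IsMatroidOn E ℬ) {X M M' : Finset α}
    (h1 : M ⊆ X) (h2 : Indep ℬ M) (h3 : ∀ x ∈ X, x ∉ M → ¬ Indep ℬ (insert x M))
    (h1' : M' ⊆ X) (h2' : Indep ℬ M') (h3' : ∀ x ∈ X, x ∉ M' → ¬ Indep ℬ (insert x M')) :
    M.card = M'.card := by
  by_contra hne
  rcases Nat.lt_or_ge M.card M'.card with h | h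
  · obtain ⟨x, hxM', hxM, hind⟩ := augment hM h2 h2' h
    exact h3 x (h1' hxM') hxM hind
  · have h' : M'.card < M.card := by omega
    obtain ⟨x, hxM, hxM', hind⟩ := augment hM h2' h2 h'
    exact h3' x (h1 hxM) hxM' hind

/-- An independent set with the cardinality of a basis is a basis. -/
theorem basis_of_indep_card (hM : IsMatroidOn E ℬ) {I B : Finset α}
    (hI : Indep ℬ I) (hB : B ∈ ℬ) (hc : B.card ≤ I.card) : I ∈ ℬ := by
  obtain ⟨B', hB', hIB'⟩ := hI
  have := card_basis_eq hM B' hB' B hB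
  have : I = B' := Finset.eq_of_subset_of_card_le hIB' (by omega)
  exact this ▸ hB'

theorem dep_insert_basis (hM : IsMatroidOn E ℬ) {B : Finset α} {g : α}
    (hB : B ∈ ℬ) (hg : g ∉ B) : ¬ Indep ℬ (insert g B) := by
  intro hind
  have : insert g B ∈ ℬ := basis_of_indep_card hM hind hB
    (Finset.card_le_card (Finset.subset_insert _ _))
  have := card_basis_eq hM _ this B hB
  rw [Finset.card_insert_of_notMem hg] at this
  omega

/-- Every dependent subset of `E` contains a circuit. -/
theorem exists_circuit_of_dep {D : Finset α} (hDE : D ⊆ E) (hD : ¬ Indep ℬ D) :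
    ∃ C, C ⊆ D ∧ Circuit E ℬ C := by
  classical
  generalize hn : D.card = n
  induction n using Nat.strong_induction_on generalizing D with
  | _ n ih =>
    by_cases hmin : ∀ D' ⊂ D, Indep ℬ D'
    · exact ⟨D, le_refl _, hDE, hD, hmin⟩
    · push_neg at hmin
      obtain ⟨D', hD'sub, hD'⟩ := hmin
      obtain ⟨C, hCD', hC⟩ := ih D'.card (hn ▸ Finset.card_lt_card hD'sub)
        (fun x hx => hDE (hD'sub.1 hx)) hD' rfl
      exact ⟨C, hCD'.trans hD'sub.1, hC⟩

theorem circuit_not_indep {C : Finset α} (hC : Circuit E ℬ C) : ¬ Indep ℬ C := hC.2.1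

theorem circuit_nsubset_indep {C S : Finset α} (hC : Circuit E ℬ C) (hS : Indep ℬ S) :
    ¬ C ⊆ S := fun h => hC.2.1 (hS.subset h)

/-- Weak circuit elimination. -/
theorem weak_elimination (hM : IsMatroidOn E ℬ) {C₁ C₂ : Finset α} {e : α}
    (hC₁ : Circuit E ℬ C₁) (hC₂ : Circuit E ℬ C₂) (hne : C₁ ≠ C₂)
    (he₁ : e ∈ C₁) (he₂ : e ∈ C₂) : ¬ Indep ℬ ((C₁ ∪ C₂).erase e) := by
  intro hX
  -- circuits are incomparable
  have hninc : ¬ C₂ ⊆ C₁ := by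
    intro hsub
    exact hC₂.2.1 (hC₁.2.2 _ ⟨hsub, fun h => hne (Finset.Subset.antisymm (h) hsub)⟩)
  obtain ⟨g, hgC₂, hgC₁⟩ := Finset.not_subset.1 hninc
  -- maximal independent extension of C₂ \ {g} inside (C₁ ∪ C₂) \ {g}
  have hC₂g : Indep ℬ (C₂.erase g) := hC₂.2.2 _ (Finset.erase_ssubset hgC₂)
  have hsub0 : C₂.erase g ⊆ (C₁ ∪ C₂).erase g :=
    fun x hx => Finset.mem_erase.2 ⟨(Finset.mem_erase.1 hx).1,
      Finset.mem_union_right _ (Finset.mem_erase.1 hx).2⟩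
  classical
  set F := ((C₁ ∪ C₂).erase g).powerset.filter (fun M => C₂.erase g ⊆ M ∧ Indep ℬ M) with hF
  have hne' : F.Nonempty := ⟨C₂.erase g, by simp [hF, Finset.mem_powerset, hsub0, hC₂g]⟩
  obtain ⟨I, hI, hmax⟩ := F.exists_max_image Finset.card hne'
  rw [hF, Finset.mem_filter, Finset.mem_powerset] at hI
  obtain ⟨hIsub, hC₂gI, hIind⟩ := hI
  have hgI : g ∉ I := fun h => (Finset.mem_erase.1 (hIsub h)).1 rfl
  obtain ⟨h, hhC₁, hhI⟩ : ∃ h ∈ C₁, h ∉ I := by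
    by_contra hcon
    push_neg at hcon
    exact circuit_nsubset_indep hC₁ hIind hcon
  have hhg : h ≠ g := fun hh => hgC₁ (hh ▸ hhC₁)
  -- cardinality comparison
  have hIsub2 : I ⊆ ((C₁ ∪ C₂).erase g).erase h := by
    intro x hx
    exact Finset.mem_erase.2 ⟨fun hxh => hhI (hxh ▸ hx), hIsub hx⟩
  have hIcard : I.card ≤ (C₁ ∪ C₂).card - 2 := by
    have h1 := Finset.card_le_card hIsub2
    rw [Finset.card_erase_of_mem (Finset.mem_erase.2 ⟨hhg, Finset.mem_union_left _ hhC₁⟩),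
      Finset.card_erase_of_mem (Finset.mem_union_right _ hgC₂)] at h1
    omega
  have hXcard : ((C₁ ∪ C₂).erase e).card = (C₁ ∪ C₂).card - 1 :=
    Finset.card_erase_of_mem (Finset.mem_union_left _ he₁)
  have hgeq2 : 2 ≤ (C₁ ∪ C₂).card := by
    have : ({g, e} : Finset α) ⊆ C₁ ∪ C₂ := by
      intro x hx
      rcases Finset.mem_insert.1 hx with rfl | hx
      · exact Finset.mem_union_right _ hgC₂
      · rw [Finset.mem_singleton.1 hx]; exact Finset.mem_union_left _ he₁
    have h2 := Finset.card_le_card this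
    rw [Finset.card_insert_of_notMem (by
      simp only [Finset.mem_singleton]; rintro rfl; exact hgC₁ he₁), Finset.card_singleton] at h2
    exact h2
  have hlt : I.card < ((C₁ ∪ C₂).erase e).card := by omega
  obtain ⟨x, hxX, hxI, hxind⟩ := augment hM hIind hX hlt
  have hxg : x ≠ g := by
    intro hxg'
    refine circuit_nsubset_indep hC₂ hxind ?_
    intro y hy
    rcases eq_or_ne y g with rfl | hyg
    · rw [hxg']; exact Finset.mem_insert_self _ _
    · exact Finset.mem_insert_of_mem (hC₂gI (Finset.mem_erase.2 ⟨hyg, hy⟩))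
  have hmem : insert x I ∈ F := by
    rw [hF, Finset.mem_filter, Finset.mem_powerset]
    refine ⟨Finset.insert_subset (Finset.mem_erase.2
      ⟨hxg, (Finset.mem_erase.1 hxX).2⟩) hIsub,
      hC₂gI.trans (Finset.subset_insert _ _), hxind⟩
  have := hmax _ hmem
  rw [Finset.card_insert_of_notMem hxI] at this
  omega


/-- Fundamental circuit: existence. -/
theorem exists_fund_circuit (hM : IsMatroidOn E ℬ) {B : Finset α} {g : α}
    (hB : B ∈ ℬ) (hgE : g ∈ E) (hg : g ∉ B) :
    ∃ C, Circuit E ℬ C ∧ C ⊆ insert g B ∧ g ∈ C := by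
  have hdep : ¬ Indep ℬ (insert g B) := dep_insert_basis hM hB hg
  have hsubE : insert g B ⊆ E := Finset.insert_subset hgE (hM.2.1 B hB)
  obtain ⟨C, hCsub, hC⟩ := exists_circuit_of_dep hsubE hdep
  refine ⟨C, hC, hCsub, ?_⟩
  by_contra hgC
  refine circuit_nsubset_indep hC (indep_of_mem hB) ?_
  intro x hx
  rcases Finset.mem_insert.1 (hCsub hx) with rfl | h
  · exact absurd hx hgC
  · exact h

/-- Fundamental circuit: uniqueness. -/
theorem fund_circuit_unique (hM : IsMatroidOn E ℬ) {B : Finset α} {g : α} {C₁ C₂ : Finset α}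
    (hB : B ∈ ℬ) (hg : g ∉ B)
    (hC₁ : Circuit E ℬ C₁) (h₁ : C₁ ⊆ insert g B)
    (hC₂ : Circuit E ℬ C₂) (h₂ : C₂ ⊆ insert g B) : C₁ = C₂ := by
  by_contra hne
  have hgmem : ∀ (C : Finset α), Circuit E ℬ C → C ⊆ insert g B → g ∈ C := by
    intro C hC hCsub
    by_contra hgC
    refine circuit_nsubset_indep hC (indep_of_mem hB) ?_
    intro x hx
    rcases Finset.mem_insert.1 (hCsub hx) with rfl | h
    · exact absurd hx hgC
    · exact h
  have helim := weak_elimination hM hC₁ hC₂ hne (hgmem _ hC₁ h₁) (hgmem _ hC₂ h₂)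
  refine helim ((indep_of_mem hB).subset ?_)
  intro x hx
  rw [Finset.mem_erase] at hx
  rcases Finset.mem_union.1 hx.2 with h | h
  · rcases Finset.mem_insert.1 (h₁ h) with rfl | h'
    · exact absurd rfl hx.1
    · exact h'
  · rcases Finset.mem_insert.1 (h₂ h) with rfl | h'
    · exact absurd rfl hx.1
    · exact h'

/-- Basis exchange along a circuit. -/
theorem exchange_along_circuit (hM : IsMatroidOn E ℬ) {B C : Finset α} {f h : α}
    (hB : B ∈ ℬ) (hf : f ∉ B) (hC : Circuit E ℬ C) (hCsub : C ⊆ insert f B)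
    (hh : h ∈ C) (hhf : h ≠ f) : insert f (B.erase h) ∈ ℬ := by
  have hhB : h ∈ B := by
    rcases Finset.mem_insert.1 (hCsub hh) with rfl | h'
    · exact absurd rfl hhf
    · exact h'
  have hfC : f ∈ C := by
    by_contra hfC
    refine circuit_nsubset_indep hC (indep_of_mem hB) ?_
    intro x hx
    rcases Finset.mem_insert.1 (hCsub hx) with rfl | h'
    · exact absurd hx hfC
    · exact h'
  have hind : Indep ℬ (insert f (B.erase h)) := by
    by_contra hdep
    have hsubE : insert f (B.erase h) ⊆ E :=
      Finset.insert_subset (hC.1 hfC) ((Finset.erase_subset _ _).trans (hM.2.1 B hB))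
    obtain ⟨D, hDsub, hD⟩ := exists_circuit_of_dep hsubE hdep
    have hDB : D ⊆ insert f B :=
      hDsub.trans (Finset.insert_subset_insert _ (Finset.erase_subset _ _))
    have := fund_circuit_unique hM hB hf hD hDB hC hCsub
    subst this
    have := hDsub hh
    rw [Finset.mem_insert, Finset.mem_erase] at this
    rcases this with rfl | ⟨hne, -⟩
    · exact hhf rfl
    · exact hne rfl
  have hcard : B.card ≤ (insert f (B.erase h)).card := by
    rw [Finset.card_insert_of_notMem (fun hmem => hf (Finset.mem_of_mem_erase hmem)),
      Finset.card_erase_of_mem hhB]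
    have := Finset.card_pos.2 ⟨h, hhB⟩
    omega
  exact basis_of_indep_card hM hind hB hcard

/-- Transitivity of spanning: if `Y` is independent, every element of `T` is spanned
by `Y`, and `g` is spanned by `T`, then `g` is spanned by `Y`. -/
theorem span_trans (hM : IsMatroidOn E ℬ) {Y T : Finset α} {g : α}
    (hY : Indep ℬ Y) (hT : Indep ℬ T) (hgY' : g ∉ Y)
    (hTY : ∀ x ∈ T, x ∈ Y ∨ ¬ Indep ℬ (insert x Y))
    (hgT : ¬ Indep ℬ (insert g T)) : ¬ Indep ℬ (insert g Y) := by
  intro hgY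
  -- Y is maximal independent in Y ∪ T
  have hYmax : ∀ x ∈ Y ∪ T, x ∉ Y → ¬ Indep ℬ (insert x Y) := by
    intro x hx hxY
    rcases Finset.mem_union.1 hx with h | h
    · exact absurd h hxY
    · rcases hTY x h with h' | h'
      · exact absurd h' hxY
      · exact h'
  -- extend T to a maximal independent subset M' of Y ∪ T ∪ {g}
  obtain ⟨M', hTM', hM'sub, hM'ind, hM'max⟩ :=
    exists_maximal_indep (X := insert g (Y ∪ T)) hT
      ((Finset.subset_union_right).trans (Finset.subset_insert _ _))
  have hgM' : g ∉ M' := by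
    intro hgM'
    exact hgT (hM'ind.subset (Finset.insert_subset hgM' hTM'))
  have hM'sub' : M' ⊆ Y ∪ T := by
    intro x hx
    rcases Finset.mem_insert.1 (hM'sub hx) with rfl | h
    · exact absurd hx hgM'
    · exact h
  -- M' is maximal independent in Y ∪ T
  have hM'max' : ∀ x ∈ Y ∪ T, x ∉ M' → ¬ Indep ℬ (insert x M') :=
    fun x hx => hM'max x (Finset.mem_insert_of_mem hx)
  -- so |M'| = |Y|
  have hcard1 : M'.card = Y.card :=
    maximal_indep_card_eq hM hM'sub' hM'ind hM'max'
      Finset.subset_union_left hY hYmax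
  -- extend insert g Y to a maximal independent subset N of Y ∪ T ∪ {g}
  obtain ⟨N, hgYN, hNsub, hNind, hNmax⟩ :=
    exists_maximal_indep (X := insert g (Y ∪ T)) hgY
      (Finset.insert_subset_insert _ Finset.subset_union_left)
  have hcard2 : M'.card = N.card :=
    maximal_indep_card_eq hM hM'sub hM'ind hM'max hNsub hNind hNmax
  have hcard3 : Y.card + 1 ≤ N.card := by
    have := Finset.card_le_card hgYN
    rw [Finset.card_insert_of_notMem hgY'] at this
    exact this
  omega


/-- The set of externally passive elements of a basis. -/
def epSet (E : Finset α) (ℬ : Finset (Finset α)) (σ : α → ℕ) (B : Finset α) : Finset α :=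
  E.filter (fun g => g ∉ B ∧ ¬ ExtActive E ℬ σ B g)

theorem mem_epSet {B : Finset α} {g : α} :
    g ∈ epSet E ℬ σ B ↔ g ∈ E ∧ g ∉ B ∧ ¬ ExtActive E ℬ σ B g := by
  simp [epSet, Finset.mem_filter, and_assoc]

theorem active_of_circuit_gt (hσ : Function.Injective σ) {B : Finset α} {g : α} {D : Finset α}
    (hB : B ∈ ℬ) (hg : g ∉ B) (hD : Circuit E ℬ D)
    (hsub : D ⊆ insert g (B.filter (fun x => σ g < σ x))) : ExtActive E ℬ σ B g := by
  have hgD : g ∈ D := by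
    by_contra hgD
    refine circuit_nsubset_indep hD (indep_of_mem hB) ?_
    intro x hx
    rcases Finset.mem_insert.1 (hsub hx) with rfl | h'
    · exact absurd hx hgD
    · exact (Finset.mem_filter.1 h').1
  refine ⟨hg, D, hD, ?_, hgD, ?_⟩
  · intro x hx
    rcases Finset.mem_insert.1 (hsub hx) with rfl | h'
    · exact Finset.mem_insert_self _ _
    · exact Finset.mem_insert_of_mem (Finset.mem_filter.1 h').1
  · intro x hx
    rcases Finset.mem_insert.1 (hsub hx) with rfl | h'
    · exact le_refl _
    · exact le_of_lt (Finset.mem_filter.1 h').2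

theorem circuit_gt_of_active (hσ : Function.Injective σ) {B : Finset α} {g : α}
    (hB : B ∈ ℬ) (hact : ExtActive E ℬ σ B g) :
    ∃ D, Circuit E ℬ D ∧ g ∈ D ∧ D ⊆ insert g (B.filter (fun x => σ g < σ x)) := by
  obtain ⟨hg, C, hC, hCsub, hgC, hmin⟩ := hact
  refine ⟨C, hC, hgC, ?_⟩
  intro x hx
  rcases Finset.mem_insert.1 (hCsub hx) with rfl | h'
  · exact Finset.mem_insert_self _ _
  · refine Finset.mem_insert_of_mem (Finset.mem_filter.2 ⟨h', ?_⟩)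
    have hle := hmin x hx
    have hne : g ≠ x := fun h => hg (h ▸ h')
    exact lt_of_le_of_ne hle (fun h => hne (hσ h))

/-- A passive element's fundamental circuit contains a strictly smaller element. -/
theorem passive_witness (hM : IsMatroidOn E ℬ) {B : Finset α} {g : α}
    (hB : B ∈ ℬ) (hgE : g ∈ E) (hg : g ∉ B) (hpass : ¬ ExtActive E ℬ σ B g) :
    ∃ C, Circuit E ℬ C ∧ C ⊆ insert g B ∧ g ∈ C ∧ ∃ h ∈ C, h ∈ B ∧ σ h < σ g := by
  obtain ⟨C, hC, hCsub, hgC⟩ := exists_fund_circuit hM hB hgE hg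
  refine ⟨C, hC, hCsub, hgC, ?_⟩
  by_contra hcon
  push_neg at hcon
  refine hpass ⟨hg, C, hC, hCsub, hgC, ?_⟩
  intro x hx
  rcases Finset.mem_insert.1 (hCsub hx) with rfl | h'
  · exact le_refl _
  · exact le_of_not_gt (fun hlt => absurd hlt (by simpa using hcon x hx h'))

/-- Key lemma: externally active elements remain active after an external pivot. -/
theorem active_pivot_transfer (hM : IsMatroidOn E ℬ) (hσ : Function.Injective σ)
    {B : Finset α} {e f g : α} {C : Finset α}
    (hB : B ∈ ℬ) (hB' : insert f (B.erase e) ∈ ℬ)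
    (he : e ∈ B) (hf : f ∉ B) (hC : Circuit E ℬ C) (hCsub : C ⊆ insert f B)
    (hfC : f ∈ C) (heC : e ∈ C) (hmin : IsMinOf σ e C)
    (hg : g ∉ B) (hgf : g ≠ f)
    (hact : ExtActive E ℬ σ B g) : ExtActive E ℬ σ (insert f (B.erase e)) g := by
  set B' := insert f (B.erase e) with hB'def
  have hgB' : g ∉ B' := by
    intro hmem
    rcases Finset.mem_insert.1 hmem with rfl | h
    · exact hgf rfl
    · exact hg (Finset.mem_of_mem_erase h)
  obtain ⟨D, hD, hgD, hDsub⟩ := circuit_gt_of_active hσ hB hact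
  by_cases heD : e ∈ D
  · -- eliminate e between D and C
    have hef : e ≠ f := fun h => hf (h ▸ he)
    have hfD : f ∉ D := by
      intro hfD
      rcases Finset.mem_insert.1 (hDsub hfD) with h | h
      · exact hgf h.symm
      · exact hf (Finset.mem_filter.1 h).1
    have hDC : D ≠ C := fun h => hfD (h ▸ hfC)
    have hdep := weak_elimination hM hD hC hDC heD heC
    have hsubE : (D ∪ C).erase e ⊆ E := by
      intro x hx
      rcases Finset.mem_union.1 (Finset.mem_of_mem_erase hx) with h | h
      · exact hD.1 h
      · exact hC.1 h
    obtain ⟨D', hD'sub, hD'⟩ := exists_circuit_of_dep hsubE hdep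
    have hge : σ g < σ e := by
      have := hDsub heD
      rcases Finset.mem_insert.1 this with h | h
      · exact absurd h.symm (fun hh => hg (hh ▸ he))
      · exact (Finset.mem_filter.1 h).2
    refine active_of_circuit_gt hσ hB' hgB' hD' ?_
    intro x hx
    have hx' := hD'sub hx
    rw [Finset.mem_erase, Finset.mem_union] at hx'
    rcases eq_or_ne x g with rfl | hxg
    · exact Finset.mem_insert_self _ _
    · refine Finset.mem_insert_of_mem (Finset.mem_filter.2 ⟨?_, ?_⟩)
      · -- x ∈ B'
        rcases hx'.2 with h | h
        · rcases Finset.mem_insert.1 (hDsub h) with rfl | h'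
          · exact absurd rfl hxg
          · exact Finset.mem_insert_of_mem
              (Finset.mem_erase.2 ⟨hx'.1, (Finset.mem_filter.1 h').1⟩)
        · rcases Finset.mem_insert.1 (hCsub h) with rfl | h'
          · exact Finset.mem_insert_self _ _
          · exact Finset.mem_insert_of_mem (Finset.mem_erase.2 ⟨hx'.1, h'⟩)
      · -- σ g < σ x
        rcases hx'.2 with h | h
        · rcases Finset.mem_insert.1 (hDsub h) with rfl | h'
          · exact absurd rfl hxg
          · exact (Finset.mem_filter.1 h').2
        · exact lt_of_lt_of_le hge (hmin.2 x h)
  · -- D avoids e, hence stays inside B'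
    refine active_of_circuit_gt hσ hB' hgB' hD ?_
    intro x hx
    rcases Finset.mem_insert.1 (hDsub hx) with rfl | h'
    · exact Finset.mem_insert_self _ _
    · have hxB := (Finset.mem_filter.1 h').1
      have hxe : x ≠ e := fun hh => heD (hh ▸ hx)
      exact Finset.mem_insert_of_mem (Finset.mem_filter.2
        ⟨Finset.mem_insert_of_mem (Finset.mem_erase.2 ⟨hxe, hxB⟩), (Finset.mem_filter.1 h').2⟩)


/-- Workhorse: activity is transferred from `B'` to `B` when every large element of `B'`
is in `B` or active w.r.t. `B`. -/
theorem active_mono (hM : IsMatroidOn E ℬ) (hσ : Function.Injective σ)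
    {B B' : Finset α} {g : α} (hB : B ∈ ℬ) (hB' : B' ∈ ℬ)
    (hgE : g ∈ E) (hg : g ∉ B) (hg' : g ∉ B')
    (hcover : ∀ x ∈ B', σ g < σ x → x ∈ B ∨ ExtActive E ℬ σ B x)
    (hact : ExtActive E ℬ σ B' g) : ExtActive E ℬ σ B g := by
  obtain ⟨D, hD, hgD, hDsub⟩ := circuit_gt_of_active hσ hB' hact
  set Y := B.filter (fun x => σ g < σ x) with hY
  set T := B'.filter (fun x => σ g < σ x) with hT
  have hYind : Indep ℬ Y := (indep_of_mem hB).subset (Finset.filter_subset _ _)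
  have hTind : Indep ℬ T := (indep_of_mem hB').subset (Finset.filter_subset _ _)
  have hgY : g ∉ Y := fun h => hg (Finset.mem_filter.1 h).1
  have hgT : ¬ Indep ℬ (insert g T) :=
    not_indep_of_subset (circuit_not_indep hD) hDsub
  have hTY : ∀ x ∈ T, x ∈ Y ∨ ¬ Indep ℬ (insert x Y) := by
    intro x hx
    obtain ⟨hxB', hxgt⟩ := Finset.mem_filter.1 hx
    rcases hcover x hxB' hxgt with h | h
    · exact Or.inl (Finset.mem_filter.2 ⟨h, hxgt⟩)
    · right
      obtain ⟨Dx, hDx, hxDx, hDxsub⟩ := circuit_gt_of_active hσ hB h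
      refine not_indep_of_subset (circuit_not_indep hDx) ?_
      intro y hy
      rcases Finset.mem_insert.1 (hDxsub hy) with rfl | h'
      · exact Finset.mem_insert_self _ _
      · obtain ⟨hyB, hygt⟩ := Finset.mem_filter.1 h'
        exact Finset.mem_insert_of_mem (Finset.mem_filter.2 ⟨hyB, hxgt.trans hygt⟩)
  have hdep := span_trans hM hYind hTind hgY hTY hgT
  have hsubE : insert g Y ⊆ E :=
    Finset.insert_subset hgE ((Finset.filter_subset _ _).trans (hM.2.1 B hB))
  obtain ⟨D'', hD''sub, hD''⟩ := exists_circuit_of_dep hsubE hdep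
  exact active_of_circuit_gt hσ hB hg hD'' hD''sub

theorem mem_epSet_of_not_active (hM : IsMatroidOn E ℬ) {B : Finset α} {g : α}
    (hgE : g ∈ E) (hg : g ∉ B) (h : ¬ ExtActive E ℬ σ B g) : g ∈ epSet E ℬ σ B :=
  mem_epSet.2 ⟨hgE, hg, h⟩

theorem active_of_notMem_epSet {B : Finset α} {g : α}
    (hgE : g ∈ E) (hg : g ∉ B) (h : g ∉ epSet E ℬ σ B) : ExtActive E ℬ σ B g := by
  by_contra hcon
  exact h (mem_epSet.2 ⟨hgE, hg, hcon⟩)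

/-- L1: an external pivot strictly shrinks the passive set. -/
theorem pivot_epSet (hM : IsMatroidOn E ℬ) (hσ : Function.Injective σ)
    {B B' : Finset α} (hp : extPivot E ℬ σ B B') :
    epSet E ℬ σ B' ⊂ epSet E ℬ σ B := by
  obtain ⟨hB, hB', e, f, he, hf, rfl, C, hC, hCsub, hfC, heC, hmin⟩ := hp
  have hef : e ≠ f := fun h => hf (h ▸ he)
  have hfB' : f ∈ insert f (B.erase e) := Finset.mem_insert_self _ _
  have hCsubB' : C ⊆ insert e (insert f (B.erase e)) := by
    intro x hx
    rcases Finset.mem_insert.1 (hCsub hx) with rfl | h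
    · exact Finset.mem_insert_of_mem (Finset.mem_insert_self _ _)
    · rcases eq_or_ne x e with rfl | hxe
      · exact Finset.mem_insert_self _ _
      · exact Finset.mem_insert_of_mem
          (Finset.mem_insert_of_mem (Finset.mem_erase.2 ⟨hxe, h⟩))
  have heB' : e ∉ insert f (B.erase e) := by
    intro h
    rcases Finset.mem_insert.1 h with h' | h'
    · exact hef h'
    · exact (Finset.mem_erase.1 h').1 rfl
  have heact : ExtActive E ℬ σ (insert f (B.erase e)) e := ⟨heB', C, hC, hCsubB', hmin⟩
  constructor
  · -- subset
    intro g hg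
    obtain ⟨hgE, hgB', hgpass⟩ := mem_epSet.1 hg
    have hgf : g ≠ f := fun h => hgB' (h ▸ hfB')
    have hge : g ≠ e := by
      rintro rfl
      exact hgpass heact
    have hgB : g ∉ B := by
      intro h
      exact hgB' (Finset.mem_insert_of_mem (Finset.mem_erase.2 ⟨hge, h⟩))
    refine mem_epSet.2 ⟨hgE, hgB, fun hact => hgpass ?_⟩
    exact active_pivot_transfer hM hσ hB hB' he hf hC hCsub hfC heC hmin hgB hgf hact
  · -- strict: f witnesses
    intro hsub
    have hfep : f ∈ epSet E ℬ σ B := by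
      refine mem_epSet.2 ⟨hC.1 hfC, hf, ?_⟩
      intro hact
      obtain ⟨-, C', hC', hC'sub, -, hmin'⟩ := hact
      have : C' = C := fund_circuit_unique hM hB hf hC' hC'sub hC hCsub
      subst this
      have h1 := hmin' e heC
      have h2 := hmin.2 f hfC
      exact hef (hσ (le_antisymm h2 h1))
    have := hsub hfep
    exact (mem_epSet.1 this).2.1 hfB'

theorem rtg_epSet (hM : IsMatroidOn E ℬ) (hσ : Function.Injective σ)
    {B B' : Finset α} (h : Relation.ReflTransGen (extPivot E ℬ σ) B B') :
    epSet E ℬ σ B' ⊆ epSet E ℬ σ B := by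
  induction h with
  | refl => exact Finset.Subset.refl _
  | tail _ hp ih => exact (pivot_epSet hM hσ hp).1.trans ih

/-- Weight of a basis. -/
def wt (σ : α → ℕ) (B : Finset α) : ℕ := ∑ x ∈ B, 2 ^ (σ x)

theorem wt_exchange {B : Finset α} {h g : α} (hh : h ∈ B) (hg : g ∉ B) :
    wt σ (insert g (B.erase h)) + 2 ^ (σ h) = wt σ B + 2 ^ (σ g) := by
  unfold wt
  rw [Finset.sum_insert (fun hmem => hg (Finset.mem_of_mem_erase hmem))]
  rw [← Finset.sum_erase_add B _ hh]
  ring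

theorem pivot_wt (hσ : Function.Injective σ) {B B' : Finset α}
    (hp : extPivot E ℬ σ B B') : wt σ B < wt σ B' := by
  obtain ⟨hB, hB', e, f, he, hf, rfl, C, hC, hCsub, hfC, heC, hmin⟩ := hp
  have hef : e ≠ f := fun h => hf (h ▸ he)
  have hlt : σ e < σ f :=
    lt_of_le_of_ne (hmin.2 f hfC) (fun h => hef (hσ h))
  have := wt_exchange (σ := σ) he hf
  have hpow : (2:ℕ) ^ (σ e) < 2 ^ (σ f) := Nat.pow_lt_pow_right one_lt_two hlt
  omega

theorem rtg_wt (hσ : Function.Injective σ) {B B' : Finset α}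
    (h : Relation.ReflTransGen (extPivot E ℬ σ) B B') : B = B' ∨ wt σ B < wt σ B' := by
  induction h with
  | refl => exact Or.inl rfl
  | tail _ hp ih =>
    rcases ih with rfl | hlt
    · exact Or.inr (pivot_wt hσ hp)
    · exact Or.inr (hlt.trans (pivot_wt hσ hp))


/-- L4 step: if `epSet B' ⊆ epSet B` and `B ≠ B'`, there is a pivot from `B`
towards `B'`. -/
theorem exists_pivot_step (hM : IsMatroidOn E ℬ) (hσ : Function.Injective σ)
    {B B' : Finset α} (hB : B ∈ ℬ) (hB' : B' ∈ ℬ)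
    (hsub : epSet E ℬ σ B' ⊆ epSet E ℬ σ B) (hne : B ≠ B') :
    ∃ B'', extPivot E ℬ σ B B'' ∧ epSet E ℬ σ B' ⊆ epSet E ℬ σ B'' := by
  classical
  set Δ := (B \ B') ∪ (B' \ B) with hΔ
  have hΔne : Δ.Nonempty := by
    rw [hΔ]
    by_contra hcon
    rw [Finset.not_nonempty_iff_eq_empty, Finset.union_eq_empty] at hcon
    exact hne (Finset.Subset.antisymm
      (fun x hx => by
        by_contra h
        have : x ∈ B \ B' := Finset.mem_sdiff.2 ⟨hx, h⟩
        rw [hcon.1] at this; simp at this)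
      (fun x hx => by
        by_contra h
        have : x ∈ B' \ B := Finset.mem_sdiff.2 ⟨hx, h⟩
        rw [hcon.2] at this; simp at this))
  obtain ⟨f, hfΔ, hfmax⟩ := Δ.exists_max_image σ hΔne
  -- above f, B and B' agree
  have hagree : ∀ y, σ f < σ y → (y ∈ B ↔ y ∈ B') := by
    intro y hy
    have hyΔ : y ∉ Δ := fun h => absurd (hfmax y h) (not_le_of_gt hy)
    rw [hΔ, Finset.mem_union, Finset.mem_sdiff, Finset.mem_sdiff] at hyΔ
    push_neg at hyΔ
    constructor
    · intro h; exact hyΔ.1 h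
    · intro h; exact hyΔ.2 h
  -- f ∈ B' \ B
  have hfB' : f ∈ B' \ B := by
    rcases Finset.mem_union.1 hfΔ with h | h
    · exfalso
      rw [Finset.mem_sdiff] at h
      have hfE : f ∈ E := hM.2.1 B hB h.1
      have hfact : ExtActive E ℬ σ B' f := by
        refine active_of_notMem_epSet hfE h.2 ?_
        intro hmem
        exact (mem_epSet.1 (hsub hmem)).2.1 h.1
      obtain ⟨D, hD, hfD, hDsub⟩ := circuit_gt_of_active hσ hB' hfact
      refine circuit_nsubset_indep hD (indep_of_mem hB) ?_
      intro x hx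
      rcases Finset.mem_insert.1 (hDsub hx) with rfl | h'
      · exact h.1
      · obtain ⟨hxB', hxgt⟩ := Finset.mem_filter.1 h'
        exact (hagree x hxgt).2 hxB'
    · exact h
  rw [Finset.mem_sdiff] at hfB'
  have hfE : f ∈ E := hM.2.1 B' hB' hfB'.1
  -- f is passive w.r.t. B
  have hfpass : ¬ ExtActive E ℬ σ B f := by
    intro hact
    obtain ⟨D, hD, hfD, hDsub⟩ := circuit_gt_of_active hσ hB hact
    refine circuit_nsubset_indep hD (indep_of_mem hB') ?_
    intro x hx
    rcases Finset.mem_insert.1 (hDsub hx) with rfl | h'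
    · exact hfB'.1
    · obtain ⟨hxB, hxgt⟩ := Finset.mem_filter.1 h'
      exact (hagree x hxgt).1 hxB
  obtain ⟨C, hC, hCsub, hfC, h0, h0C, h0B, h0lt⟩ := passive_witness hM hB hfE hfB'.2 hfpass
  -- e := minimum of C
  obtain ⟨e, heC, hemin⟩ := C.exists_min_image σ ⟨f, hfC⟩
  have hef : e ≠ f := by
    intro h
    subst h
    exact absurd (hemin h0 h0C) (not_le_of_gt h0lt)
  have heB : e ∈ B := by
    rcases Finset.mem_insert.1 (hCsub heC) with rfl | h
    · exact absurd rfl hef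
    · exact h
  set B'' := insert f (B.erase e) with hB''def
  have hB'' : B'' ∈ ℬ := exchange_along_circuit hM hB hfB'.2 hC hCsub heC hef
  have hpivot : extPivot E ℬ σ B B'' :=
    ⟨hB, hB'', e, f, heB, hfB'.2, rfl, C, hC, hCsub, hfC, heC, heC, hemin⟩
  refine ⟨B'', hpivot, ?_⟩
  -- epSet B' ⊆ epSet B''
  intro g hg
  obtain ⟨hgE, hgB', hgpass'⟩ := mem_epSet.1 hg
  have hgmem := hsub hg
  obtain ⟨-, hgB, hgpass⟩ := mem_epSet.1 hgmem
  have hgf : g ≠ f := fun h => hgB' (h ▸ hfB'.1)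
  have hgB'' : g ∉ B'' := by
    intro h
    rcases Finset.mem_insert.1 h with h' | h'
    · exact hgf h'
    · exact hgB (Finset.mem_of_mem_erase h')
  refine mem_epSet.2 ⟨hgE, hgB'', fun hact => hgpass' ?_⟩
  refine active_mono hM hσ hB' hB'' hgE hgB' hgB'' ?_ hact
  intro x hxB'' hxgt
  rcases Finset.mem_insert.1 hxB'' with rfl | hxB
  · exact Or.inl hfB'.1
  · have hxB := Finset.mem_of_mem_erase hxB
    by_cases hxB'mem : x ∈ B'
    · exact Or.inl hxB'mem
    · right
      have hxE : x ∈ E := hM.2.1 B hB hxB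
      refine active_of_notMem_epSet hxE hxB'mem ?_
      intro hmem
      exact (mem_epSet.1 (hsub hmem)).2.1 hxB
  
theorem rtg_of_epSet_subset (hM : IsMatroidOn E ℬ) (hσ : Function.Injective σ)
    {B B' : Finset α} (hB : B ∈ ℬ) (hB' : B' ∈ ℬ)
    (hsub : epSet E ℬ σ B' ⊆ epSet E ℬ σ B) :
    Relation.ReflTransGen (extPivot E ℬ σ) B B' := by
  generalize hn : (epSet E ℬ σ B).card = n
  induction n using Nat.strong_induction_on generalizing B with
  | _ n ih =>
    rcases eq_or_ne B B' with rfl | hne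
    · exact Relation.ReflTransGen.refl
    · obtain ⟨B'', hp, hsub''⟩ := exists_pivot_step hM hσ hB hB' hsub hne
      have hss := pivot_epSet hM hσ hp
      have hlt : (epSet E ℬ σ B'').card < n := hn ▸ Finset.card_lt_card hss
      exact Relation.ReflTransGen.head hp (ih _ hlt hp.2.1 hsub'' rfl)


/-- L5: binary joins exist (in terms of passive sets). -/
theorem exists_join (hM : IsMatroidOn E ℬ) (hσ : Function.Injective σ)
    {B₁ B₂ : Finset α} (hB₁ : B₁ ∈ ℬ) (hB₂ : B₂ ∈ ℬ) :
    ∃ J ∈ ℬ, epSet E ℬ σ J ⊆ epSet E ℬ σ B₁ ∧ epSet E ℬ σ J ⊆ epSet E ℬ σ B₂ ∧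
      ∀ C ∈ ℬ, epSet E ℬ σ C ⊆ epSet E ℬ σ B₁ → epSet E ℬ σ C ⊆ epSet E ℬ σ B₂ →
        epSet E ℬ σ C ⊆ epSet E ℬ σ J := by
  classical
  set S := epSet E ℬ σ B₁ ∩ epSet E ℬ σ B₂ with hS
  set W := E \ S with hW
  set F := ℬ.filter (fun B => B ⊆ W) with hF
  have hB₁W : B₁ ⊆ W := by
    intro x hx
    rw [hW, Finset.mem_sdiff, hS, Finset.mem_inter]
    exact ⟨hM.2.1 B₁ hB₁ hx, fun h => (mem_epSet.1 h.1).2.1 hx⟩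
  have hFne : F.Nonempty := ⟨B₁, by rw [hF, Finset.mem_filter]; exact ⟨hB₁, hB₁W⟩⟩
  obtain ⟨J, hJ, hJmax⟩ := F.exists_max_image (wt σ) hFne
  rw [hF, Finset.mem_filter] at hJ
  obtain ⟨hJB, hJW⟩ := hJ
  -- (b) epSet J ⊆ S
  have hJS : epSet E ℬ σ J ⊆ S := by
    intro g hg
    obtain ⟨hgE, hgJ, hgpass⟩ := mem_epSet.1 hg
    by_contra hgS
    have hgW : g ∈ W := by rw [hW, Finset.mem_sdiff]; exact ⟨hgE, hgS⟩
    obtain ⟨C, hC, hCsub, hgC, h0, h0C, h0J, h0lt⟩ :=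
      passive_witness hM hJB hgE hgJ hgpass
    have hne : h0 ≠ g := fun h => hgJ (h ▸ h0J)
    have hJ' : insert g (J.erase h0) ∈ ℬ :=
      exchange_along_circuit hM hJB hgJ hC hCsub h0C hne
    have hmem : insert g (J.erase h0) ∈ F := by
      rw [hF, Finset.mem_filter]
      exact ⟨hJ', Finset.insert_subset hgW ((Finset.erase_subset _ _).trans hJW)⟩
    have hle := hJmax _ hmem
    have hwt := wt_exchange (σ := σ) h0J hgJ
    have hpow : (2:ℕ) ^ (σ h0) < 2 ^ (σ g) := Nat.pow_lt_pow_right one_lt_two h0lt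
    omega
  refine ⟨J, hJB, hJS.trans (hS ▸ Finset.inter_subset_left),
    hJS.trans (hS ▸ Finset.inter_subset_right), ?_⟩
  -- (c) minimality
  intro C hC hC₁ hC₂ g hg
  obtain ⟨hgE, hgC, hgpass⟩ := mem_epSet.1 hg
  have hgS : g ∈ S := hS ▸ Finset.mem_inter.2 ⟨hC₁ hg, hC₂ hg⟩
  have hgJ : g ∉ J := by
    intro h
    have := hJW h
    rw [hW, Finset.mem_sdiff] at this
    exact this.2 hgS
  refine mem_epSet.2 ⟨hgE, hgJ, fun hact => hgpass ?_⟩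
  refine active_mono hM hσ hC hJB hgE hgC hgJ ?_ hact
  intro x hxJ hxgt
  by_cases hxC : x ∈ C
  · exact Or.inl hxC
  · right
    have hxW := hJW hxJ
    rw [hW, Finset.mem_sdiff] at hxW
    refine active_of_notMem_epSet hxW.1 hxC ?_
    intro hmem
    exact hxW.2 (hS ▸ Finset.mem_inter.2 ⟨hC₁ hmem, hC₂ hmem⟩)

end Aux


/-- Las Vergnas: the external order on the bases of a matroid, with a bottom element
`0̂` adjoined, is a lattice: it is a partial order in which every pair of elements has
a join and a meet. -/
theorem external_order_with_bot_is_lattice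
    (E : Finset α) (ℬ : Finset (Finset α)) (hM : IsMatroidOn E ℬ)
    (σ : α → ℕ) (hσ : Function.Injective σ) :
    ∀ P : Finset (Option (Finset α)), P = insert none (ℬ.image some) →
    ∀ le : Option (Finset α) → Option (Finset α) → Prop,
      le = withBotLe (extPivot E ℬ σ) →
    (∀ a ∈ P, ∀ b ∈ P, le a b → le b a → a = b) ∧
    (∀ a ∈ P, ∀ b ∈ P, ∃ j ∈ P, le a j ∧ le b j ∧
      ∀ c ∈ P, le a c → le b c → le j c) ∧
    (∀ a ∈ P, ∀ b ∈ P, ∃ m ∈ P, le m a ∧ le m b ∧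
      ∀ c ∈ P, le c a → le c b → le c m) := by
  intro P hP le hle
  subst hP hle
  set r := extPivot E ℬ σ with hr
  set P : Finset (Option (Finset α)) := insert none (ℬ.image some) with hPdef
  have hmemP : ∀ a, a ∈ P → a = none ∨ ∃ B ∈ ℬ, a = some B := by
    intro a ha
    rw [hPdef, Finset.mem_insert, Finset.mem_image] at ha
    rcases ha with h | ⟨B, hB, h⟩
    · exact Or.inl h
    · exact Or.inr ⟨B, hB, h.symm⟩
  have hsomeP : ∀ B ∈ ℬ, some B ∈ P := by
    intro B hB
    rw [hPdef, Finset.mem_insert]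
    exact Or.inr (Finset.mem_image_of_mem _ hB)
  have hnoneP : none ∈ P := Finset.mem_insert_self _ _
  have hle_refl : ∀ x, withBotLe r x x := by
    intro x
    cases x with
    | none => trivial
    | some a => exact Relation.ReflTransGen.refl
  have hle_trans : ∀ x y z, withBotLe r x y → withBotLe r y z → withBotLe r x z := by
    intro x y z hxy hyz
    cases x with
    | none => trivial
    | some a =>
      cases y with
      | none => exact hxy.elim
      | some b =>
        cases z with
        | none => exact hyz.elim
        | some c => exact Relation.ReflTransGen.trans hxy hyz
  have hbot : ∀ x, withBotLe r none x := fun x => trivial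
  -- antisymmetry
  have hanti : ∀ a ∈ P, ∀ b ∈ P, withBotLe r a b → withBotLe r b a → a = b := by
    intro a _ b _ hab hba
    cases a with
    | none =>
      cases b with
      | none => rfl
      | some b' => exact hba.elim
    | some a' =>
      cases b with
      | none => exact hab.elim
      | some b' =>
        rcases rtg_wt hσ hab with rfl | h1
        · rfl
        · rcases rtg_wt hσ hba with h2 | h2
          · rw [h2]
          · omega
  -- joins
  have hjoin : ∀ a ∈ P, ∀ b ∈ P, ∃ j ∈ P, withBotLe r a j ∧ withBotLe r b j ∧
      ∀ c ∈ P, withBotLe r a c → withBotLe r b c → withBotLe r j c := by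
    intro a ha b hb
    rcases hmemP a ha with rfl | ⟨B₁, hB₁, rfl⟩
    · exact ⟨b, hb, hbot b, hle_refl b, fun c _ _ h2 => h2⟩
    · rcases hmemP b hb with rfl | ⟨B₂, hB₂, rfl⟩
      · exact ⟨some B₁, ha, hle_refl _, hbot _, fun c _ h1 _ => h1⟩
      · obtain ⟨J, hJ, hJ1, hJ2, hJmin⟩ := exists_join hM hσ hB₁ hB₂
        refine ⟨some J, hsomeP J hJ, ?_, ?_, ?_⟩
        · exact rtg_of_epSet_subset hM hσ hB₁ hJ hJ1
        · exact rtg_of_epSet_subset hM hσ hB₂ hJ hJ2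
        · intro c hc h1 h2
          rcases hmemP c hc with rfl | ⟨C, hC, rfl⟩
          · exact h1.elim
          · have e1 := rtg_epSet hM hσ h1
            have e2 := rtg_epSet hM hσ h2
            exact rtg_of_epSet_subset hM hσ hJ hC (hJmin C hC e1 e2)
  refine ⟨hanti, hjoin, ?_⟩
  -- least upper bounds of arbitrary subsets of P
  have hlub : ∀ Q : Finset (Option (Finset α)), Q ⊆ P →
      ∃ s ∈ P, (∀ x ∈ Q, withBotLe r x s) ∧
        ∀ c ∈ P, (∀ x ∈ Q, withBotLe r x c) → withBotLe r s c := by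
    intro Q
    induction Q using Finset.induction_on with
    | empty =>
      intro _
      exact ⟨none, hnoneP, fun x hx => absurd hx (Finset.notMem_empty x),
        fun c _ _ => hbot c⟩
    | @insert x Q hxQ ih =>
      intro hsub
      have hxP : x ∈ P := hsub (Finset.mem_insert_self _ _)
      obtain ⟨s, hsP, hsub', hsleast⟩ := ih ((Finset.subset_insert _ _).trans hsub)
      obtain ⟨j, hjP, hxj, hsj, hjleast⟩ := hjoin x hxP s hsP
      refine ⟨j, hjP, ?_, ?_⟩
      · intro y hy
        rcases Finset.mem_insert.1 hy with rfl | hyQ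
        · exact hxj
        · exact hle_trans _ _ _ (hsub' y hyQ) hsj
      · intro c hc hub
        refine hjleast c hc (hub x (Finset.mem_insert_self _ _)) ?_
        exact hsleast c hc (fun y hy => hub y (Finset.mem_insert_of_mem hy))
  -- meets
  intro a ha b hb
  classical
  set Q := P.filter (fun x => withBotLe r x a ∧ withBotLe r x b) with hQ
  obtain ⟨m, hmP, hub, hleast⟩ := hlub Q (Finset.filter_subset _ _)
  refine ⟨m, hmP, ?_, ?_, ?_⟩
  · exact hleast a ha (fun x hx => ((Finset.mem_filter.1 hx).2).1)
  · exact hleast b hb (fun x hx => ((Finset.mem_filter.1 hx).2).2)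
  · intro c hc h1 h2
    exact hub c (Finset.mem_filter.2 ⟨hc, h1, h2⟩)

end TutteActivities
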